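/- Let μ > 0 and 0 < ξ ≤ ρ be real constants. Let ε : [0,∞) → ℝ be differentiable with ε(0) = 0, with ε' positive and nonincreasing, and suppose ξ ≤ ε'(t)·[1/μ + ∫_0^t exp(−ε(z)) dz] ≤ ρ for all t ≥ 0. Then inf_{t ≥ 0} ε'(t) > 0. -/

import Mathlib

/-- Let `μ > 0` and `0 < ξ ≤ ρ`. If `ε` is differentiable on
`[0,∞)` with `ε 0 = 0`, derivative `ε'` positive and nonincreasing, and
`ξ ≤ ε' t * (1/μ + ∫_0^t exp (-(ε z)) dz) ≤ ρ` for all `t ≥ 0`, then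
`inf_{t ≥ 0} ε' t > 0`. -/
theorem stmt_5 (mu ξ ρ : ℝ) (hmu : 0 < mu) (hξ : 0 < ξ) (hξρ : ξ ≤ ρ)
    (ε ε' : ℝ → ℝ)
    (hderiv : ∀ t ∈ Set.Ici (0 : ℝ), HasDerivWithinAt ε (ε' t) (Set.Ici 0) t)
    (hε0 : ε 0 = 0)
    (hpos : ∀ t ∈ Set.Ici (0 : ℝ), 0 < ε' t)
    (hanti : AntitoneOn ε' (Set.Ici 0))
    (hineq : ∀ t ∈ Set.Ici (0 : ℝ),
      ξ ≤ ε' t * (1 / mu + ∫ z in (0 : ℝ)..t, Real.exp (-(ε z))) ∧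
        ε' t * (1 / mu + ∫ z in (0 : ℝ)..t, Real.exp (-(ε z))) ≤ ρ) :
    ∃ c : ℝ, 0 < c ∧ ∀ t ∈ Set.Ici (0 : ℝ), c ≤ ε' t := by
  have hεcont : ContinuousOn ε (Set.Ici 0) := fun t ht => (hderiv t ht).continuousWithinAt
  set g : ℝ → ℝ := fun z => Real.exp (-(ε z)) with hgdef
  have hgcont : ContinuousOn g (Set.Ici 0) := Real.continuous_exp.comp_continuousOn hεcont.neg
  set F : ℝ → ℝ := fun t => 1 / mu + ∫ z in (0 : ℝ)..t, g z with hFdef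
  have hgint : ∀ t ∈ Set.Ici (0 : ℝ), IntervalIntegrable g MeasureTheory.volume 0 t := by
    intro t ht
    apply ContinuousOn.intervalIntegrable
    rw [Set.uIcc_of_le ht]
    exact hgcont.mono (Set.Icc_subset_Ici_self)
  have hFpos : ∀ t ∈ Set.Ici (0 : ℝ), 0 < F t := by
    intro t ht
    have h1 : (0 : ℝ) ≤ ∫ z in (0 : ℝ)..t, g z :=
      intervalIntegral.integral_nonneg ht (fun x _ => (Real.exp_pos _).le)
    have : 0 < 1 / mu := by positivity
    simp only [hFdef]; linarith
  have hkey : ∀ t ∈ Set.Ici (0 : ℝ), ξ ≤ ε' t * F t := fun t ht => (hineq t ht).1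
  -- derivative of F
  have hFd : ∀ t ∈ Set.Ici (0 : ℝ), HasDerivWithinAt F (g t) (Set.Ici 0) t := by
    intro t ht
    rcases eq_or_lt_of_le (Set.mem_Ici.mp ht : (0:ℝ) ≤ t) with h0 | h0
    · subst h0
      have := intervalIntegral.integral_hasDerivWithinAt_right (s := Set.Ici (0:ℝ))
        (t := Set.Ioi (0:ℝ)) (hgint 0 Set.self_mem_Ici)
        ((hgcont.mono Set.Ioi_subset_Ici_self).stronglyMeasurableAtFilter_nhdsWithin
          measurableSet_Ioi 0)
        ((hgcont 0 Set.self_mem_Ici).mono Set.Ioi_subset_Ici_self)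
      exact this.const_add (1 / mu)
    · have hmeas := (hgcont.mono (Set.Ioi_subset_Ici_self)).stronglyMeasurableAtFilter
        (μ := MeasureTheory.volume) isOpen_Ioi t h0
      have hct : ContinuousAt g t := (hgcont t (le_of_lt h0)).continuousAt (Ici_mem_nhds h0)
      have := intervalIntegral.integral_hasDerivAt_right (hgint t (le_of_lt h0)) hmeas hct
      exact (this.const_add (1 / mu)).hasDerivWithinAt
  have hFcont : ContinuousOn F (Set.Ici 0) := fun t ht => (hFd t ht).continuousWithinAt
  -- the comparison function G
  set G : ℝ → ℝ := fun t => Real.log (mu * F t) - (1 - g t) / ξ with hGdef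
  have hGcont : ContinuousOn G (Set.Ici 0) := by
    apply ContinuousOn.sub
    · exact (continuousOn_const.mul hFcont).log
        (fun t ht => ne_of_gt (mul_pos hmu (hFpos t ht)))
    · exact (continuousOn_const.sub hgcont).div_const ξ
  have hGanti : AntitoneOn G (Set.Ici 0) := by
    apply antitoneOn_of_hasDerivWithinAt_nonpos (convex_Ici 0) hGcont
      (f' := fun x => mu * g x / (mu * F x) - (0 - Real.exp (-(ε x)) * -(ε' x)) / ξ)
    · intro x hx
      rw [interior_Ici] at hx ⊢
      have hx0 : x ∈ Set.Ici (0 : ℝ) := Set.mem_Ici.mpr (le_of_lt (Set.mem_Ioi.mp hx))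
      have hFx : HasDerivAt F (g x) x := by
        have hmeas := (hgcont.mono (Set.Ioi_subset_Ici_self)).stronglyMeasurableAtFilter
          (μ := MeasureTheory.volume) isOpen_Ioi x hx
        have hct : ContinuousAt g x := (hgcont x hx0).continuousAt (Ici_mem_nhds hx)
        exact ((intervalIntegral.integral_hasDerivAt_right (hgint x hx0) hmeas
          hct).const_add (1 / mu))
      have hεx : HasDerivAt ε (ε' x) x := (hderiv x hx0).hasDerivAt (Ici_mem_nhds hx)
      have h1 : HasDerivAt (fun t => Real.log (mu * F t)) (mu * g x / (mu * F x)) x :=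
        (hFx.const_mul mu).log (ne_of_gt (mul_pos hmu (hFpos x hx0)))
      have h2 : HasDerivAt (fun t => (1 - g t) / ξ)
          ((0 - Real.exp (-(ε x)) * -(ε' x)) / ξ) x := by
        exact ((hasDerivAt_const x (1:ℝ)).sub (hεx.neg.exp)).div_const ξ
      exact ((h1.sub h2)).hasDerivWithinAt
    · intro x hx
      rw [interior_Ici] at hx
      have hx0 : x ∈ Set.Ici (0 : ℝ) := Set.mem_Ici.mpr (le_of_lt (Set.mem_Ioi.mp hx))
      have hgx : 0 < g x := Real.exp_pos _
      have hFx : 0 < F x := hFpos x hx0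
      have hk : ξ ≤ ε' x * F x := hkey x hx0
      have hexp : Real.exp (-(ε x)) = g x := rfl
      rw [hexp]
      have h1 : mu * g x / (mu * F x) = g x / F x :=
        mul_div_mul_left (g x) (F x) (ne_of_gt hmu)
      rw [h1]
      rw [sub_nonpos]
      have h2 : (0 - g x * -(ε' x)) / ξ = g x * ε' x / ξ := by ring
      rw [h2, div_le_div_iff₀ hFx hξ]
      nlinarith [hgx.le, hk, mul_le_mul_of_nonneg_left hk hgx.le]
  -- G 0 = 0
  have hF0 : F 0 = 1 / mu := by simp [hFdef]
  have hG0 : G 0 = 0 := by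
    simp only [hGdef, hF0, hgdef, hε0]
    rw [mul_one_div_cancel (ne_of_gt hmu)]
    simp
  refine ⟨ξ * mu / Real.exp (1 / ξ), by positivity, ?_⟩
  intro t ht
  have hGt : G t ≤ 0 := hG0 ▸ hGanti (Set.self_mem_Ici) ht ht
  have hgt : 0 ≤ g t := (Real.exp_pos _).le
  have hlog : Real.log (mu * F t) ≤ 1 / ξ := by
    have h2 : Real.log (mu * F t) ≤ (1 - g t) / ξ := by
      simp only [hGdef] at hGt; linarith
    have h3 : (1 - g t) / ξ ≤ 1 / ξ := by gcongr <;> linarith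
    linarith
  have hmuF : mu * F t ≤ Real.exp (1 / ξ) :=
    (Real.log_le_iff_le_exp (mul_pos hmu (hFpos t ht))).mp hlog
  have hk : ξ ≤ ε' t * F t := hkey t ht
  rw [div_le_iff₀ (Real.exp_pos _)]
  calc ξ * mu = mu * ξ := by ring
    _ ≤ mu * (ε' t * F t) := mul_le_mul_of_nonneg_left hk hmu.le
    _ = ε' t * (mu * F t) := by ring
    _ ≤ ε' t * Real.exp (1 / ξ) := mul_le_mul_of_nonneg_left hmuF (hpos t ht).le
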